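/- Let K be a set of integers ≥ 2, let l ≥ 2 be an integer, and let n, w, t be positive integers. Suppose there exist a (wt, w, K, 1)-CDF (equivalently, a strictly cyclic K-GDD of type w^t) and, for every k ∈ K, an l-MGDD of type k^n. Then there exists an l-SCHGDD of type (n, w^t). -/

import Mathlib

/-- A `k`-SCHGDD of type `(n, m^t)`: a finite family of `k`-element base blocks in
`Fin n × ZMod (m*t)` such that no block has two points in the same group (same first
coordinate), and for every ordered pair `i ≠ j` the difference list `Δ_{ij}` covers
`ZMod (m*t)` minus the subgroup generated by `t` exactly once, hitting no element of
that subgroup. -/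
def IsSCHGDD (k n m t : ℕ) (B : Finset (Finset (Fin n × ZMod (m * t)))) : Prop :=
  (∀ b ∈ B, b.card = k) ∧
  (∀ b ∈ B, ∀ p ∈ b, ∀ q ∈ b, p.1 = q.1 → p = q) ∧
  (∀ i j : Fin n, i ≠ j → ∀ z : ZMod (m * t),
    (z ∈ AddSubgroup.zmultiples ((t : ZMod (m * t))) →
      (∑ b ∈ B, ((b ×ˢ b).filter
        (fun pq => pq.1.1 = i ∧ pq.2.1 = j ∧ pq.1.2 - pq.2.2 = z)).card) = 0) ∧
    (z ∉ AddSubgroup.zmultiples ((t : ZMod (m * t))) →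
      (∑ b ∈ B, ((b ×ˢ b).filter
        (fun pq => pq.1.1 = i ∧ pq.2.1 = j ∧ pq.1.2 - pq.2.2 = z)).card) = 1))

/-- Existence of a `k`-SCHGDD of type `(n, m^t)`. -/
def ExistsSCHGDD (k n m t : ℕ) : Prop :=
  ∃ B : Finset (Finset (Fin n × ZMod (m * t))), IsSCHGDD k n m t B

/-- A `(g*t, g, K, 1)`-CDF: a finite family of base blocks in `ZMod (g*t)`, each of size
belonging to `K`, whose difference list covers `ZMod (g*t)` minus the subgroup generated
by `t` exactly once, hitting no element of that subgroup. -/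
def IsCDF (g t : ℕ) (K : Set ℕ) (F : Finset (Finset (ZMod (g * t)))) : Prop :=
  (∀ b ∈ F, b.card ∈ K) ∧
  (∀ z : ZMod (g * t),
    (z ∈ AddSubgroup.zmultiples ((t : ZMod (g * t))) →
      (∑ b ∈ F, ((b ×ˢ b).filter (fun pq => pq.1 ≠ pq.2 ∧ pq.1 - pq.2 = z)).card) = 0) ∧
    (z ∉ AddSubgroup.zmultiples ((t : ZMod (g * t))) →
      (∑ b ∈ F, ((b ×ˢ b).filter (fun pq => pq.1 ≠ pq.2 ∧ pq.1 - pq.2 = z)).card) = 1))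

/-- A `k`-MGDD of type `s^n`, realized on the point set `Fin n × Fin s` with the
`n` groups `{i} × Fin s` and the `s` holes `Fin n × {j}`: blocks have size `k`,
no block contains two points of a common group or of a common hole, and every pair of
points lying in neither a common group nor a common hole is in exactly one block. -/
def IsMGDD (k s n : ℕ) (B : Finset (Finset (Fin n × Fin s))) : Prop :=
  (∀ b ∈ B, b.card = k) ∧
  (∀ b ∈ B, ∀ p ∈ b, ∀ q ∈ b, p ≠ q → p.1 ≠ q.1 ∧ p.2 ≠ q.2) ∧
  (∀ p q : Fin n × Fin s, p.1 ≠ q.1 → p.2 ≠ q.2 →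
    (B.filter (fun b => p ∈ b ∧ q ∈ b)).card = 1)

/-- Construction 3.3: if there exist a `(w*t, w, K, 1)`-CDF (i.e. a strictly cyclic
`K`-GDD of type `w^t`) and, for every `k ∈ K`, an `l`-MGDD of type `k^n`, then there
exists an `l`-SCHGDD of type `(n, w^t)`. -/
theorem schgdd_from_cdf_and_mgdd (K : Set ℕ) (l n w t : ℕ)
    (hK : ∀ k ∈ K, 2 ≤ k) (hl : 2 ≤ l) (hn : 0 < n) (hw : 0 < w) (ht : 0 < t)
    (h1 : ∃ F : Finset (Finset (ZMod (w * t))), IsCDF w t K F)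
    (h2 : ∀ k ∈ K, ∃ B : Finset (Finset (Fin n × Fin k)), IsMGDD l k n B) :
    ExistsSCHGDD l n w t := by
  classical
  simp only [IsCDF] at h1
  simp only [IsMGDD] at h2
  simp only [ExistsSCHGDD, IsSCHGDD]
  classical
  obtain ⟨F, hFcard, hFdiff⟩ := h1
  choose D hD1 hD2 hD3 using fun b : {u // u ∈ F} => h2 b.1.card (hFcard b.1 b.2)
  -- enumeration of each base block
  set x : ∀ b : {u // u ∈ F}, Fin b.1.card → ZMod (w * t) :=
    fun b j => (b.1.equivFin.symm j : ZMod (w * t)) with hx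
  have hxinj : ∀ b, Function.Injective (x b) := fun b =>
    Subtype.val_injective.comp b.1.equivFin.symm.injective
  have hxmem : ∀ b j, x b j ∈ b.1 := fun b j => (b.1.equivFin.symm j).2
  have hxsurj : ∀ b, ∀ y ∈ b.1, ∃ j, x b j = y := by
    intro b y hy
    exact ⟨b.1.equivFin ⟨y, hy⟩, by simp [hx]⟩
  set φ : ∀ b : {u // u ∈ F}, Fin n × Fin b.1.card → Fin n × ZMod (w * t) :=
    fun b p => (p.1, x b p.2) with hφ
  have hφinj : ∀ b, Function.Injective (φ b) := by
    intro b p q hpq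
    rw [Prod.ext_iff] at hpq ⊢
    exact ⟨hpq.1, hxinj b hpq.2⟩
  refine ⟨F.attach.biUnion (fun b => (D b).image (fun d => d.image (φ b))), ?_, ?_, ?_⟩
  · -- block size l
    intro S hS
    simp only [Finset.mem_biUnion, Finset.mem_image] at hS
    obtain ⟨b, -, d, hd, rfl⟩ := hS
    rw [Finset.card_image_of_injective _ (hφinj b), hD1 b d hd]
  · -- distinct groups within a block
    intro S hS P hP Q hQ h1'
    simp only [Finset.mem_biUnion, Finset.mem_image] at hS
    obtain ⟨b, -, d, hd, rfl⟩ := hS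
    obtain ⟨p, hp, rfl⟩ := Finset.mem_image.mp hP
    obtain ⟨q, hq, rfl⟩ := Finset.mem_image.mp hQ
    by_contra hne
    have hpq : p ≠ q := fun h => hne (by rw [h])
    exact (hD2 b d hd p hp q hq hpq).1 h1'
  · -- the difference counting
    intro i j hij z
    -- key injectivity across distinct base blocks
    have hNE : ∀ b b' : {u // u ∈ F}, ∀ d ∈ D b, ∀ d' ∈ D b', b ≠ b' →
        d.image (φ b) ≠ d'.image (φ b') := by
      intro b b' d hd d' hd' hbb' hEq
      obtain ⟨p, hp, q, hq, hpq⟩ := Finset.one_lt_card.mp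
        (by rw [hD1 b d hd]; omega : 1 < d.card)
      have h2' := hD2 b d hd p hp q hq hpq
      set z0 := x b p.2 - x b q.2 with hz0
      have hbcnt : 1 ≤ ((b.1 ×ˢ b.1).filter
          (fun pq => pq.1 ≠ pq.2 ∧ pq.1 - pq.2 = z0)).card := by
        refine Finset.card_pos.mpr ⟨(x b p.2, x b q.2), ?_⟩
        simp only [Finset.mem_filter, Finset.mem_product]
        exact ⟨⟨hxmem b p.2, hxmem b q.2⟩, (hxinj b).ne h2'.2, hz0.symm⟩
      have hP : (p.1, x b p.2) ∈ d'.image (φ b') := by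
        rw [← hEq]; exact Finset.mem_image_of_mem _ hp
      have hQ : (q.1, x b q.2) ∈ d'.image (φ b') := by
        rw [← hEq]; exact Finset.mem_image_of_mem _ hq
      obtain ⟨p1, hp1, hp1e⟩ := Finset.mem_image.mp hP
      obtain ⟨q1, hq1, hq1e⟩ := Finset.mem_image.mp hQ
      have hp1e2 : x b' p1.2 = x b p.2 := congrArg Prod.snd hp1e
      have hq1e2 : x b' q1.2 = x b q.2 := congrArg Prod.snd hq1e
      have hbcnt' : 1 ≤ ((b'.1 ×ˢ b'.1).filter
          (fun pq => pq.1 ≠ pq.2 ∧ pq.1 - pq.2 = z0)).card := by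
        refine Finset.card_pos.mpr ⟨(x b' p1.2, x b' q1.2), ?_⟩
        simp only [Finset.mem_filter, Finset.mem_product]
        refine ⟨⟨hxmem b' p1.2, hxmem b' q1.2⟩, ?_, by rw [hp1e2, hq1e2]⟩
        rw [hp1e2, hq1e2]
        exact (hxinj b).ne h2'.2
      have hvne : b.1 ≠ b'.1 := fun h => hbb' (Subtype.ext h)
      have hsub : ({b.1, b'.1} : Finset (Finset (ZMod (w * t)))) ⊆ F := by
        intro u hu
        rcases Finset.mem_insert.mp hu with h | h
        · exact h ▸ b.2
        · exact (Finset.mem_singleton.mp h) ▸ b'.2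
      have hge : 2 ≤ ∑ u ∈ F, ((u ×ˢ u).filter
          (fun pq => pq.1 ≠ pq.2 ∧ pq.1 - pq.2 = z0)).card := by
        calc 2 ≤ ((b.1 ×ˢ b.1).filter (fun pq => pq.1 ≠ pq.2 ∧ pq.1 - pq.2 = z0)).card
            + ((b'.1 ×ˢ b'.1).filter (fun pq => pq.1 ≠ pq.2 ∧ pq.1 - pq.2 = z0)).card := by
              omega
          _ = ∑ u ∈ ({b.1, b'.1} : Finset (Finset (ZMod (w * t)))),
              ((u ×ˢ u).filter (fun pq => pq.1 ≠ pq.2 ∧ pq.1 - pq.2 = z0)).card :=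
              (Finset.sum_pair (f := fun u => ((u ×ˢ u).filter
                (fun pq => pq.1 ≠ pq.2 ∧ pq.1 - pq.2 = z0)).card) hvne).symm
          _ ≤ _ := Finset.sum_le_sum_of_subset hsub
      by_cases hz : z0 ∈ AddSubgroup.zmultiples ((t : ZMod (w * t)))
      · rw [(hFdiff z0).1 hz] at hge; omega
      · rw [(hFdiff z0).2 hz] at hge; omega
    -- disjointness of the biUnion
    have hdisj : (↑F.attach : Set {u // u ∈ F}).PairwiseDisjoint
        (fun b => (D b).image (fun d => d.image (φ b))) := by
      intro b hb b' hb' hbb'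
      simp only [Function.onFun]
      rw [Finset.disjoint_left]
      intro S hS hS'
      obtain ⟨d, hd, rfl⟩ := Finset.mem_image.mp hS
      obtain ⟨d', hd', hEq⟩ := Finset.mem_image.mp hS'
      exact hNE b b' d hd d' hd' hbb' hEq.symm
    have key : (∑ S ∈ F.attach.biUnion (fun b => (D b).image (fun d => d.image (φ b))),
        ((S ×ˢ S).filter
          (fun pq => pq.1.1 = i ∧ pq.2.1 = j ∧ pq.1.2 - pq.2.2 = z)).card)
        = ∑ u ∈ F, ((u ×ˢ u).filter (fun pq => pq.1 ≠ pq.2 ∧ pq.1 - pq.2 = z)).card := by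
      refine (Finset.sum_biUnion hdisj).trans ?_
      rw [← Finset.sum_attach F (fun u => ((u ×ˢ u).filter
        (fun pq => pq.1 ≠ pq.2 ∧ pq.1 - pq.2 = z)).card)]
      refine Finset.sum_congr rfl ?_
      intro b _
      rw [Finset.sum_image (fun d hd d' hd' h =>
        Finset.image_injective (hφinj b) h)]
      -- per-block count identity
      have hcnt : ∀ d ∈ D b, ((d.image (φ b) ×ˢ d.image (φ b)).filter
          (fun pq => pq.1.1 = i ∧ pq.2.1 = j ∧ pq.1.2 - pq.2.2 = z)).card
          = (Finset.univ.filter (fun ac : Fin b.1.card × Fin b.1.card =>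
              ((i, ac.1) ∈ d ∧ (j, ac.2) ∈ d) ∧ x b ac.1 - x b ac.2 = z)).card := by
        intro d hd
        refine (Finset.card_bij
          (fun ac _ => ((i, x b ac.1), (j, x b ac.2))) ?_ ?_ ?_).symm
        · intro ac hac
          simp only [Finset.mem_filter, Finset.mem_univ, true_and] at hac
          refine Finset.mem_filter.mpr ⟨Finset.mem_product.mpr ⟨?_, ?_⟩, rfl, rfl, hac.2⟩
          · exact Finset.mem_image.mpr ⟨(i, ac.1), hac.1.1, rfl⟩
          · exact Finset.mem_image.mpr ⟨(j, ac.2), hac.1.2, rfl⟩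
        · intro ac hac ac' hac' h
          rw [Prod.ext_iff, Prod.ext_iff, Prod.ext_iff] at h
          exact Prod.ext (hxinj b h.1.2) (hxinj b h.2.2)
        · rintro ⟨P, Q⟩ hPQ
          simp only [Finset.mem_filter, Finset.mem_product] at hPQ
          obtain ⟨⟨hPm, hQm⟩, hPi, hQj, hdiff⟩ := hPQ
          obtain ⟨p, hp, rfl⟩ := Finset.mem_image.mp hPm
          obtain ⟨q, hq, rfl⟩ := Finset.mem_image.mp hQm
          have hpi : p.1 = i := hPi
          have hqj : q.1 = j := hQj
          refine ⟨(p.2, q.2), ?_, ?_⟩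
          · simp only [Finset.mem_filter, Finset.mem_univ, true_and]
            exact ⟨⟨hpi ▸ hp, hqj ▸ hq⟩, hdiff⟩
          · simp [φ, hpi, hqj]
      rw [Finset.sum_congr rfl hcnt]
      -- double counting
      have hswap : (∑ d ∈ D b, (Finset.univ.filter
          (fun ac : Fin b.1.card × Fin b.1.card =>
            ((i, ac.1) ∈ d ∧ (j, ac.2) ∈ d) ∧ x b ac.1 - x b ac.2 = z)).card)
          = ∑ ac ∈ (Finset.univ : Finset (Fin b.1.card × Fin b.1.card)),
            if x b ac.1 - x b ac.2 = z
            then ((D b).filter (fun d => (i, ac.1) ∈ d ∧ (j, ac.2) ∈ d)).card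
            else 0 := by
        simp only [Finset.card_filter]
        rw [Finset.sum_comm]
        refine Finset.sum_congr rfl ?_
        intro ac _
        by_cases hxz : x b ac.1 - x b ac.2 = z
        · simp [hxz]
        · simp [hxz]
      rw [hswap]
      -- evaluate the MGDD pair counts
      have hpaircnt : ∀ ac : Fin b.1.card × Fin b.1.card,
          ((D b).filter (fun d => (i, ac.1) ∈ d ∧ (j, ac.2) ∈ d)).card
          = if ac.1 ≠ ac.2 then 1 else 0 := by
        intro ac
        by_cases hac : ac.1 = ac.2
        · simp only [hac, ne_eq, not_true_eq_false, if_false]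
          rw [Finset.card_eq_zero, Finset.filter_eq_empty_iff]
          intro d hd hmem
          have := (hD2 b d hd (i, ac.2) hmem.1 (j, ac.2) hmem.2
            (by simp [Prod.ext_iff]; exact fun h => absurd h hij)).2
          exact this rfl
        · simp only [ne_eq, hac, not_false_eq_true, if_true]
          exact hD3 b (i, ac.1) (j, ac.2) hij hac
      have : (∑ ac ∈ (Finset.univ : Finset (Fin b.1.card × Fin b.1.card)),
          if x b ac.1 - x b ac.2 = z
          then ((D b).filter (fun d => (i, ac.1) ∈ d ∧ (j, ac.2) ∈ d)).card
          else 0)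
          = (Finset.univ.filter (fun ac : Fin b.1.card × Fin b.1.card =>
              ac.1 ≠ ac.2 ∧ x b ac.1 - x b ac.2 = z)).card := by
        rw [Finset.card_filter]
        refine Finset.sum_congr rfl ?_
        intro ac _
        rw [hpaircnt ac]
        by_cases h1' : x b ac.1 - x b ac.2 = z <;> by_cases h2' : ac.1 = ac.2 <;>
          simp [h1', h2']
      rw [this]
      -- transfer to the CDF count via the enumeration bijection
      refine Finset.card_bij (fun ac _ => (x b ac.1, x b ac.2)) ?_ ?_ ?_
      · intro ac hac
        simp only [Finset.mem_filter, Finset.mem_univ, true_and] at hac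
        simp only [Finset.mem_filter, Finset.mem_product]
        exact ⟨⟨hxmem b ac.1, hxmem b ac.2⟩, (hxinj b).ne hac.1, hac.2⟩
      · intro ac hac ac' hac' h
        rw [Prod.ext_iff] at h
        exact Prod.ext (hxinj b h.1) (hxinj b h.2)
      · rintro ⟨u, v⟩ huv
        simp only [Finset.mem_filter, Finset.mem_product] at huv
        obtain ⟨⟨hu, hv⟩, hne, hdiff⟩ := huv
        obtain ⟨a, rfl⟩ := hxsurj b u hu
        obtain ⟨c, rfl⟩ := hxsurj b v hv
        refine ⟨(a, c), ?_, rfl⟩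
        simp only [Finset.mem_filter, Finset.mem_univ, true_and]
        exact ⟨fun h => hne (by rw [h]), hdiff⟩
    rw [key]
    exact hFdiff z
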